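/- Let (S,·,⁻¹) be an inverse semigroup containing, as an ideal, a copy of the Brandt semigroup B_{G,I} over a group G with nonempty index set I, where the zero of B_{G,I} is a zero element of S. Then for every idempotent f of S and every nonzero element d of B_{G,I}, the product fd equals either d or the zero, and the product df equals either d or the zero. -/

import Mathlib

universe u v

/-- An inverse semigroup: every element has a unique (generalized) inverse. -/
class InverseSemigroup (S : Type*) extends Semigroup S, Inv S where
  mul_inv_mul : ∀ x : S, x * x⁻¹ * x = x
  inv_mul_inv : ∀ x : S, x⁻¹ * x * x⁻¹ = x⁻¹
  inv_unique : ∀ x y : S, x * y * x = x → y * x * y = y → y = x⁻¹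

/-- Carrier of the Brandt semigroup `B_{G,I}`: `none` is the zero element. -/
def Brandt (I G : Type*) : Type _ := Option (I × G × I)

open Classical in
/-- Multiplication of the Brandt semigroup `B_{G,I}`. -/
noncomputable def bmul {I G : Type*} [Mul G] : Brandt I G → Brandt I G → Brandt I G
  | some (l1, g1, r1), some (l2, g2, r2) => if r1 = l2 then some (l1, g1 * g2, r2) else none
  | _, _ => none

open Classical in
lemma bmul_ss {I G : Type*} [Mul G] (l1 r1 l2 r2 : I) (g1 g2 : G) :
    bmul (some (l1, g1, r1) : Brandt I G) (some (l2, g2, r2)) =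
      if r1 = l2 then some (l1, g1 * g2, r2) else none := by
  unfold bmul; rfl

lemma IS.inv_idem {S : Type*} [InverseSemigroup S] {e : S} (he : e * e = e) : e⁻¹ = e := by
  have := InverseSemigroup.inv_unique e e (by rw [he, he]) (by rw [he, he])
  exact this.symm

lemma IS.inv_inv {S : Type*} [InverseSemigroup S] (x : S) : (x⁻¹)⁻¹ = x :=
  (InverseSemigroup.inv_unique x⁻¹ x (InverseSemigroup.inv_mul_inv x)
    (InverseSemigroup.mul_inv_mul x)).symm

lemma IS.mul_idem {S : Type*} [InverseSemigroup S] {e f : S}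
    (he : e * e = e) (hf : f * f = f) : (e * f) * (e * f) = e * f := by
  set b := (e * f)⁻¹ with hb
  have he' : ∀ x : S, e * (e * x) = e * x := fun x => by rw [← mul_assoc, he]
  have hf' : ∀ x : S, f * (f * x) = f * x := fun x => by rw [← mul_assoc, hf]
  have imi' : ∀ x : S, b * (e * (f * (b * x))) = b * x := fun x => by
    have := congrArg (· * x) (InverseSemigroup.inv_mul_inv (e * f))
    simpa only [mul_assoc] using this
  have key1 : (e * f) * (f * b * e) * (e * f) = e * f := by
    have := InverseSemigroup.mul_inv_mul (e * f)
    simp only [mul_assoc] at this ⊢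
    rw [hf', he']
    exact this
  have key2 : (f * b * e) * (e * f) * (f * b * e) = f * b * e := by
    simp only [mul_assoc]
    rw [he', hf']
    exact congrArg (f * ·) (imi' e)
  have key : f * b * e = b := InverseSemigroup.inv_unique (e * f) (f * b * e) key1 key2
  have hbb' : (f * b * e) * (f * b * e) = f * b * e := by
    simp only [mul_assoc]
    exact congrArg (f * ·) (imi' e)
  rw [key] at hbb'
  have hab : e * f = b :=
    (IS.inv_inv (e * f)).symm.trans (IS.inv_idem hbb')
  rw [hab, hbb']

/-- Let an inverse semigroup `S` contain a copy (via `φ`) of the Brandt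
semigroup `B_{G,I}` as an ideal, the zero of `B_{G,I}` being a zero of `S`. Then for every
idempotent `f` of `S` and every nonzero `d` of `B_{G,I}`, each of `f d` and `d f` equals
either `d` or the zero. -/
theorem idempotent_mul_brandt_element {S : Type u} [InverseSemigroup S]
    {I : Type v} {G : Type v} [Nonempty I] [Group G]
    (φ : Brandt I G → S) (hinj : Function.Injective φ)
    (hhom : ∀ a b : Brandt I G, φ (bmul a b) = φ a * φ b)
    (hideal : ∀ s : S, ∀ x : Brandt I G, φ x * s ∈ Set.range φ ∧ s * φ x ∈ Set.range φ)
    (hzero : ∀ s : S, φ (none : Brandt I G) * s = φ none ∧ s * φ (none : Brandt I G) = φ none) :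
    ∀ f : S, f * f = f → ∀ (l : I) (g : G) (r : I),
      (f * φ (some (l, g, r)) = φ (some (l, g, r)) ∨ f * φ (some (l, g, r)) = φ none) ∧
      (φ (some (l, g, r)) * f = φ (some (l, g, r)) ∨ φ (some (l, g, r)) * f = φ none) := by
  intro f hf l g r
  set d : Brandt I G := some (l, g, r) with hd
  constructor
  · -- left multiplication
    set e : Brandt I G := some (l, (1 : G), l) with he
    have hed : bmul e d = d := by simp [bmul_ss, he, hd]; rfl
    have hee : bmul e e = e := by simp [bmul_ss, he]; rfl
    have hEidem : φ e * φ e = φ e := by rw [← hhom, hee]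
    obtain ⟨y, hy⟩ := (hideal f e).2
    have hmain : f * φ d = φ (bmul y d) := by
      calc f * φ d = f * (φ e * φ d) := by rw [← hhom, hed]
        _ = (f * φ e) * φ d := by rw [mul_assoc]
        _ = φ y * φ d := by rw [hy]
        _ = φ (bmul y d) := (hhom y d).symm
    have hyidem : bmul y y = y := by
      apply hinj
      rw [hhom, hy, IS.mul_idem hf hEidem]
    obtain _ | ⟨i, h, j⟩ := y
    · right
      rw [hmain]
      congr 1
    · have hji : j = i ∧ h * h = h := by
        by_cases hji : j = i
        · subst hji
          simp [bmul_ss] at hyidem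
          have h2 : (some (j, h * h, j) : Option (I × G × I)) = some (j, h, j) := hyidem
          simp only [Option.some.injEq, Prod.mk.injEq, true_and, and_true] at h2
          exact ⟨rfl, h2⟩
        · simp [bmul_ss, hji] at hyidem
      obtain ⟨hji, hh⟩ := hji
      have h1 : h = 1 := by
        have := mul_eq_right.mp hh
        exact this
      subst hji h1
      rw [hmain]
      by_cases hil : j = l
      · subst hil
        left
        simp [bmul_ss, hd]
      · right
        simp [bmul_ss, hd, hil]
  · -- right multiplication
    set e : Brandt I G := some (r, (1 : G), r) with he
    have hed : bmul d e = d := by simp [bmul_ss, he, hd]; rfl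
    have hee : bmul e e = e := by simp [bmul_ss, he]; rfl
    have hEidem : φ e * φ e = φ e := by rw [← hhom, hee]
    obtain ⟨y, hy⟩ := (hideal f e).1
    have hmain : φ d * f = φ (bmul d y) := by
      calc φ d * f = (φ d * φ e) * f := by rw [← hhom, hed]
        _ = φ d * (φ e * f) := by rw [mul_assoc]
        _ = φ d * φ y := by rw [hy]
        _ = φ (bmul d y) := (hhom d y).symm
    have hyidem : bmul y y = y := by
      apply hinj
      rw [hhom, hy, IS.mul_idem hEidem hf]
    obtain _ | ⟨i, h, j⟩ := y
    · right
      rw [hmain]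
      congr 1
    · have hji : j = i ∧ h * h = h := by
        by_cases hji : j = i
        · subst hji
          simp [bmul_ss] at hyidem
          have h2 : (some (j, h * h, j) : Option (I × G × I)) = some (j, h, j) := hyidem
          simp only [Option.some.injEq, Prod.mk.injEq, true_and, and_true] at h2
          exact ⟨rfl, h2⟩
        · simp [bmul_ss, hji] at hyidem
      obtain ⟨hji, hh⟩ := hji
      have h1 : h = 1 := mul_eq_right.mp hh
      subst hji h1
      rw [hmain]
      by_cases hri : r = j
      · subst hri
        left
        simp [bmul_ss, hd]
      · right
        simp [bmul_ss, hd, hri]
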